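/- Let K be ℝ or ℂ and let ε ∈ K[[x,t]] lie in the ideal (t²). If y₁, y₂ ∈ K[[x,t]] satisfy x·y₁² = (x + t + ε)·y₂², then y₁ = 0 and y₂ = 0. -/

import Mathlib

open MvPowerSeries Finset

namespace Stmt1Aux

variable {K : Type*} [Field K]

/-- The exponent `(n, m)` as a `Fin 2 →₀ ℕ`. -/
noncomputable def D (n m : ℕ) : Fin 2 →₀ ℕ := Finsupp.single 0 n + Finsupp.single 1 m

@[simp] lemma D_apply0 (n m : ℕ) : D n m 0 = n := by simp [D]
@[simp] lemma D_apply1 (n m : ℕ) : D n m 1 = m := by simp [D]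

lemma eq_D (d : Fin 2 →₀ ℕ) : d = D (d 0) (d 1) := by
  ext i
  fin_cases i <;> simp [D]

lemma D_add (a b k l : ℕ) : D a k + D b l = D (a + b) (k + l) := by
  ext i; fin_cases i <;> simp

/-- x-adic order of an element of `K[[x,t]]`. -/
noncomputable def v (f : MvPowerSeries (Fin 2) K) : ℕ :=
  sInf {n | ∃ m, MvPowerSeries.coeff (D n m) f ≠ 0}

lemma v_spec {f : MvPowerSeries (Fin 2) K} (hf : f ≠ 0) :
    ∃ m, MvPowerSeries.coeff (D (v f) m) f ≠ 0 := by
  have hne : {n | ∃ m, MvPowerSeries.coeff (D n m) f ≠ 0}.Nonempty := by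
    by_contra hemp
    apply hf
    simp only [Set.not_nonempty_iff_eq_empty, Set.eq_empty_iff_forall_notMem,
      Set.mem_setOf_eq, not_exists, not_not] at hemp
    ext d
    rw [eq_D d, hemp (d 0) (d 1), map_zero]
  exact Nat.sInf_mem hne

lemma v_le {f : MvPowerSeries (Fin 2) K} {n m : ℕ}
    (h : MvPowerSeries.coeff (D n m) f ≠ 0) : v f ≤ n := by
  unfold v
  exact Nat.sInf_le ⟨m, h⟩

lemma coeff_eq_zero_of_lt_v {f : MvPowerSeries (Fin 2) K} {n : ℕ} (hn : n < v f) (m : ℕ) :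
    MvPowerSeries.coeff (D n m) f = 0 := by
  by_contra hc
  exact absurd (v_le hc) (by omega)

/-- Leading coefficient series in `t`. -/
noncomputable def L (f : MvPowerSeries (Fin 2) K) : PowerSeries K :=
  PowerSeries.mk fun k => MvPowerSeries.coeff (D (v f) k) f

/-- Key convolution lemma at the lowest `x`-level. -/
lemma coeff_mul_lowest (f g : MvPowerSeries (Fin 2) K) (m : ℕ) :
    MvPowerSeries.coeff (D (v f + v g) m) (f * g)
      = PowerSeries.coeff m (L f * L g) := by
  classical
  rw [MvPowerSeries.coeff_mul, PowerSeries.coeff_mul]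
  rw [← Finset.sum_filter_of_ne (p := fun p => p.1 0 = v f)]
  · refine Finset.sum_nbij' (fun p => (p.1 1, p.2 1))
      (fun q => (D (v f) q.1, D (v g) q.2)) ?_ ?_ ?_ ?_ ?_
    · intro p hp
      simp only [Finset.mem_filter, HasAntidiagonal.mem_antidiagonal] at hp
      obtain ⟨hsum, h1⟩ := hp
      have hm : p.1 1 + p.2 1 = m := by
        have := DFunLike.congr_fun hsum (1 : Fin 2)
        simpa using this
      simpa [HasAntidiagonal.mem_antidiagonal] using hm
    · intro q hq
      simp only [HasAntidiagonal.mem_antidiagonal] at hq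
      simp only [Finset.mem_filter, HasAntidiagonal.mem_antidiagonal, D_apply0, and_true]
      rw [D_add, hq]
    · intro p hp
      simp only [Finset.mem_filter, HasAntidiagonal.mem_antidiagonal] at hp
      obtain ⟨hsum, h1⟩ := hp
      have h0 : p.1 0 + p.2 0 = v f + v g := by
        have := DFunLike.congr_fun hsum (0 : Fin 2)
        simpa using this
      have hp2 : p.2 0 = v g := by omega
      have e1 : D (v f) (p.1 1) = p.1 := by rw [← h1]; exact (eq_D p.1).symm
      have e2 : D (v g) (p.2 1) = p.2 := by rw [← hp2]; exact (eq_D p.2).symm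
      simp [e1, e2]
    · intro q _; simp
    · intro p hp
      simp only [Finset.mem_filter, HasAntidiagonal.mem_antidiagonal] at hp
      obtain ⟨hsum, h1⟩ := hp
      have h0 : p.1 0 + p.2 0 = v f + v g := by
        have := DFunLike.congr_fun hsum (0 : Fin 2)
        simpa using this
      have hp2 : p.2 0 = v g := by omega
      simp only [L, PowerSeries.coeff_mk]
      rw [← h1, ← hp2, ← eq_D, ← eq_D]
  · intro p hp hne
    simp only [HasAntidiagonal.mem_antidiagonal] at hp
    have h0 : p.1 0 + p.2 0 = v f + v g := by
      have := DFunLike.congr_fun hp (0 : Fin 2)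
      simpa using this
    by_contra hnot
    change p.1 0 ≠ v f at hnot
    rcases lt_or_gt_of_ne hnot with hlt | hgt
    · apply hne
      rw [eq_D p.1, coeff_eq_zero_of_lt_v (by simpa using hlt), zero_mul]
    · apply hne
      rw [eq_D p.2, coeff_eq_zero_of_lt_v (show p.2 0 < v g by omega), mul_zero]

lemma v_mul {f g : MvPowerSeries (Fin 2) K} (hf : f ≠ 0) (hg : g ≠ 0) :
    v (f * g) = v f + v g := by
  classical
  have hLf : L f ≠ 0 := by
    obtain ⟨m, hm⟩ := v_spec hf
    intro h0
    apply hm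
    have := congrArg (PowerSeries.coeff m) h0
    simpa [L] using this
  have hLg : L g ≠ 0 := by
    obtain ⟨m, hm⟩ := v_spec hg
    intro h0
    apply hm
    have := congrArg (PowerSeries.coeff m) h0
    simpa [L] using this
  have hprod : L f * L g ≠ 0 := mul_ne_zero hLf hLg
  obtain ⟨m, hm⟩ : ∃ m, PowerSeries.coeff m (L f * L g) ≠ 0 := by
    by_contra hall
    push_neg at hall
    exact hprod (PowerSeries.ext hall)
  have hub : v (f * g) ≤ v f + v g := v_le (by rw [coeff_mul_lowest]; exact hm)
  have hlb : ∀ n < v f + v g, ∀ k, MvPowerSeries.coeff (D n k) (f * g) = 0 := by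
    intro n hn k
    rw [MvPowerSeries.coeff_mul]
    apply Finset.sum_eq_zero
    intro p hp
    simp only [HasAntidiagonal.mem_antidiagonal] at hp
    have h0 : p.1 0 + p.2 0 = n := by
      have := DFunLike.congr_fun hp (0 : Fin 2)
      simpa using this
    rcases lt_or_ge (p.1 0) (v f) with hlt | hge
    · rw [eq_D p.1, coeff_eq_zero_of_lt_v (by simpa using hlt), zero_mul]
    · rw [eq_D p.2, coeff_eq_zero_of_lt_v (show p.2 0 < v g by omega), mul_zero]
  rcases lt_or_ge (v (f * g)) (v f + v g) with hlt | hge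
  · obtain ⟨m', hm'⟩ := v_spec (mul_ne_zero hf hg)
    exact absurd (hlb _ hlt m') hm'
  · omega

lemma X0_ne_zero : (MvPowerSeries.X 0 : MvPowerSeries (Fin 2) K) ≠ 0 := by
  intro h0
  have : MvPowerSeries.coeff (Finsupp.single (0 : Fin 2) 1)
      (MvPowerSeries.X 0 : MvPowerSeries (Fin 2) K) = 1 := by
    classical
    simp [MvPowerSeries.coeff_X]
  rw [h0] at this
  simp at this

lemma D_eq_single0 : D 1 0 = Finsupp.single (0 : Fin 2) 1 := by
  ext i; fin_cases i <;> simp [Finsupp.single_apply]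

lemma D_eq_single1 : D 0 1 = Finsupp.single (1 : Fin 2) 1 := by
  ext i; fin_cases i <;> simp [Finsupp.single_apply]

lemma v_X0 : v (MvPowerSeries.X 0 : MvPowerSeries (Fin 2) K) = 1 := by
  classical
  have h1 : v (MvPowerSeries.X 0 : MvPowerSeries (Fin 2) K) ≤ 1 := by
    apply v_le (m := 0)
    rw [D_eq_single0]
    simp [MvPowerSeries.coeff_X]
  have h0 : ∀ m, MvPowerSeries.coeff (D 0 m)
      (MvPowerSeries.X 0 : MvPowerSeries (Fin 2) K) = 0 := by
    intro m
    rw [MvPowerSeries.X, MvPowerSeries.coeff_monomial_ne]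
    intro hc
    have := DFunLike.congr_fun hc (0 : Fin 2)
    simpa using this
  have h2 : v (MvPowerSeries.X 0 : MvPowerSeries (Fin 2) K) ≠ 0 := by
    intro hv0
    obtain ⟨m, hm⟩ := v_spec (X0_ne_zero (K := K))
    rw [hv0] at hm
    exact hm (h0 m)
  omega

end Stmt1Aux

open Stmt1Aux

/-- In K[[x,t]] (K = ℝ or ℂ), if ε ∈ (t)² and x·y₁² = (x+t+ε)·y₂²
then y₁ = y₂ = 0. -/
theorem stmt_1 (K : Type*) [RCLike K]
    (ε : MvPowerSeries (Fin 2) K)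
    (hε : ε ∈ (Ideal.span {(MvPowerSeries.X 1 : MvPowerSeries (Fin 2) K)}) ^ 2)
    (y₁ y₂ : MvPowerSeries (Fin 2) K)
    (h : MvPowerSeries.X 0 * y₁ ^ 2
        = (MvPowerSeries.X 0 + MvPowerSeries.X 1 + ε) * y₂ ^ 2) :
    y₁ = 0 ∧ y₂ = 0 := by
  classical
  -- coefficient of t (i.e. (0,1)) in ε is 0
  rw [Ideal.span_singleton_pow, Ideal.mem_span_singleton'] at hε
  obtain ⟨c, hc⟩ := hε
  have hεcoeff : MvPowerSeries.coeff (D 0 1) ε = 0 := by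
    rw [← hc, MvPowerSeries.coeff_mul]
    apply Finset.sum_eq_zero
    intro p hp
    simp only [HasAntidiagonal.mem_antidiagonal] at hp
    have h1 : p.1 1 + p.2 1 = 1 := by
      have := DFunLike.congr_fun hp (1 : Fin 2)
      simpa using this
    rw [MvPowerSeries.X_pow_eq, MvPowerSeries.coeff_monomial_ne, mul_zero]
    intro hcon
    have : p.2 1 = 2 := by rw [hcon]; simp
    omega
  have hAcoeff : MvPowerSeries.coeff (D 0 1)
      (MvPowerSeries.X 0 + MvPowerSeries.X 1 + ε : MvPowerSeries (Fin 2) K) = 1 := by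
    have c0 : MvPowerSeries.coeff (D 0 1)
        (MvPowerSeries.X 0 : MvPowerSeries (Fin 2) K) = 0 := by
      rw [MvPowerSeries.X, MvPowerSeries.coeff_monomial_ne]
      intro hcon
      have := DFunLike.congr_fun hcon (0 : Fin 2)
      simpa using this
    have c1 : MvPowerSeries.coeff (D 0 1)
        (MvPowerSeries.X 1 : MvPowerSeries (Fin 2) K) = 1 := by
      rw [D_eq_single1]
      simp [MvPowerSeries.coeff_X]
    rw [map_add, map_add, c0, c1, hεcoeff]
    ring
  set A : MvPowerSeries (Fin 2) K :=
    MvPowerSeries.X 0 + MvPowerSeries.X 1 + ε with hA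
  have hAne : A ≠ 0 := by
    intro h0
    rw [h0] at hAcoeff
    simp at hAcoeff
  have hvA : v A = 0 := Nat.le_zero.mp (v_le (by rw [hAcoeff]; exact one_ne_zero))
  have hy₂ : y₂ = 0 := by
    by_contra hy2
    have hy2sq : y₂ ^ 2 ≠ 0 := pow_ne_zero _ hy2
    have hRne : A * y₂ ^ 2 ≠ 0 := mul_ne_zero hAne hy2sq
    have hy1 : y₁ ≠ 0 := by
      intro h0
      rw [h0] at h
      apply hRne
      rw [← h]
      ring
    have hy1sq : y₁ ^ 2 ≠ 0 := pow_ne_zero _ hy1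
    have hvL : v (MvPowerSeries.X 0 * y₁ ^ 2 : MvPowerSeries (Fin 2) K)
        = 1 + 2 * v y₁ := by
      rw [v_mul X0_ne_zero hy1sq, v_X0, sq, v_mul hy1 hy1]
      ring
    have hvR : v (A * y₂ ^ 2) = 2 * v y₂ := by
      rw [v_mul hAne hy2sq, hvA, sq, v_mul hy2 hy2]
      ring
    rw [h, hvR] at hvL
    omega
  refine ⟨?_, hy₂⟩
  rw [hy₂] at h
  have h' : MvPowerSeries.X 0 * y₁ ^ 2 = 0 := by
    rw [h]; ring
  rcases mul_eq_zero.mp h' with h'' | h''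
  · exact absurd h'' X0_ne_zero
  · exact (pow_eq_zero_iff two_ne_zero).mp h''
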